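/- Let n ≥ 1 and let d = (d_1,…,d_n) be a nonincreasing list of nonnegative integers, and for each i ∈ {1,…,n} let τ^i be a multiset of nonnegative integers with |τ^i| = d_i, such that every element of every τ^i is equal to d_j for some j ∈ {1,…,n} (i.e., the tableau T = (τ^1,…,τ^n) is feasible). For each value k occurring in d let V_k = {i ∈ {1,…,n} : d_i = k}, and for each i and each value ℓ occurring in d let μ_i^ℓ denote the multiplicity of ℓ in τ^i. Then there exists a simple graph G on vertex set {1,…,n} such that for every i the multiset of degrees in G of the neighbors of vertex i equals τ^i, if and only if both of the following hold: (a) for each value k occurring in d there exists a simple graph on vertex set V_k in which each vertex i ∈ V_k has degree μ_i^k; (b) for each pair of distinct values k, ℓ occurring in d there exists a simple bipartite graph with partite sets V_k and V_ℓ (every edge joining a vertex of V_k to a vertex of V_ℓ) in which each vertex i ∈ V_k has degree μ_i^ℓ and each vertex j ∈ V_ℓ has degree μ_j^k. -/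

import Mathlib

/-- The degree of a vertex: the number of its neighbors. -/
noncomputable def deg {V : Type*} (G : SimpleGraph V) (v : V) : ℕ :=
  (G.neighborSet v).ncard

/-- The neighborhood degree list of a vertex `v`: the multiset of the degrees
(in `G`) of the neighbors of `v`. -/
noncomputable def NDL {V : Type*} [Fintype V] (G : SimpleGraph V) (v : V) : Multiset ℕ :=
  ((G.neighborSet v).toFinite.toFinset).val.map (deg G)

section Aux

variable {n : ℕ}

lemma deg_subtype {p : Fin n → Prop} (H : SimpleGraph {i : Fin n // p i}) (x : {i // p i}) :
    deg H x = (Subtype.val '' H.neighborSet x).ncard :=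
  (Set.ncard_image_of_injective _ Subtype.val_injective).symm

lemma count_map_ncard (d : Fin n → ℕ) (G : SimpleGraph (Fin n)) (i : Fin n) (m : ℕ) :
    Multiset.count m (((G.neighborSet i).toFinite.toFinset).val.map d)
      = (G.neighborSet i ∩ {j | d j = m}).ncard := by
  classical
  rw [Multiset.count_map]
  have h1 : Multiset.filter (fun a => m = d a) ((G.neighborSet i).toFinite.toFinset).val
      = (((G.neighborSet i).toFinite.toFinset).filter (fun a => m = d a)).val := rfl
  rw [h1]
  have h2 : Multiset.card ((((G.neighborSet i).toFinite.toFinset).filter (fun a => m = d a)).val)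
      = (((G.neighborSet i).toFinite.toFinset).filter (fun a => m = d a)).card := rfl
  rw [h2, ← Set.ncard_coe_finset]
  congr 1
  rw [Finset.coe_filter]
  ext j
  simp only [Set.Finite.mem_toFinset, SimpleGraph.mem_neighborSet, Set.mem_setOf_eq,
    Set.mem_inter_iff]
  constructor
  · rintro ⟨h, rfl⟩; exact ⟨h, rfl⟩
  · rintro ⟨h, rfl⟩; exact ⟨h, rfl⟩

lemma NDL_eq_map_d (d : Fin n → ℕ) (G : SimpleGraph (Fin n)) (hdeg : ∀ j, deg G j = d j)
    (i : Fin n) : NDL G i = ((G.neighborSet i).toFinite.toFinset).val.map d :=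
  Multiset.map_congr rfl fun x _ => hdeg x

lemma card_NDL (G : SimpleGraph (Fin n)) (i : Fin n) :
    Multiset.card (NDL G i) = deg G i := by
  rw [NDL, Multiset.card_map, deg, Set.ncard_eq_toFinset_card _ (G.neighborSet i).toFinite]
  rfl

/-- The glued relation. -/
def glueRel (d : Fin n → ℕ) (Gg : ∀ k, SimpleGraph {i : Fin n // d i = k})
    (Bg : ∀ k ℓ, SimpleGraph {i : Fin n // d i = k ∨ d i = ℓ}) (i j : Fin n) : Prop :=
  if h : d i = d j then (Gg (d i)).Adj ⟨i, rfl⟩ ⟨j, h.symm⟩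
  else if d j < d i then (Bg (d j) (d i)).Adj ⟨i, Or.inr rfl⟩ ⟨j, Or.inl rfl⟩
  else (Bg (d i) (d j)).Adj ⟨i, Or.inl rfl⟩ ⟨j, Or.inr rfl⟩

lemma castG {d : Fin n → ℕ} (Gg : ∀ k, SimpleGraph {i : Fin n // d i = k})
    {a b : ℕ} (hab : a = b) {i j : Fin n} (hia : d i = a) (hja : d j = a)
    (hib : d i = b) (hjb : d j = b)
    (h : (Gg a).Adj ⟨i, hia⟩ ⟨j, hja⟩) : (Gg b).Adj ⟨i, hib⟩ ⟨j, hjb⟩ := by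
  subst hab; exact h

lemma castB {d : Fin n → ℕ} (Bg : ∀ k ℓ, SimpleGraph {i : Fin n // d i = k ∨ d i = ℓ})
    {a b a' b' : ℕ} (ha : a = a') (hb : b = b') {i j : Fin n}
    (h1 : d i = a ∨ d i = b) (h2 : d j = a ∨ d j = b)
    (h1' : d i = a' ∨ d i = b') (h2' : d j = a' ∨ d j = b')
    (h : (Bg a b).Adj ⟨i, h1⟩ ⟨j, h2⟩) : (Bg a' b').Adj ⟨i, h1'⟩ ⟨j, h2'⟩ := by
  subst ha; subst hb; exact h

lemma glueRel_symm (d : Fin n → ℕ) (Gg : ∀ k, SimpleGraph {i : Fin n // d i = k})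
    (Bg : ∀ k ℓ, SimpleGraph {i : Fin n // d i = k ∨ d i = ℓ}) :
    Symmetric (glueRel d Gg Bg) := by
  intro i j h
  unfold glueRel at h ⊢
  by_cases hd : d i = d j
  · rw [dif_pos hd] at h
    rw [dif_pos hd.symm]
    exact castG Gg hd hd.symm rfl rfl hd h.symm
  · rw [dif_neg hd] at h
    rw [dif_neg (Ne.symm hd)]
    by_cases hlt : d j < d i
    · rw [if_pos hlt] at h
      rw [if_neg (not_lt.2 hlt.le)]
      exact h.symm
    · rw [if_neg hlt] at h
      rw [if_pos (lt_of_le_of_ne (not_lt.1 hlt) hd)]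
      exact h.symm

lemma glueRel_irrefl (d : Fin n → ℕ) (Gg : ∀ k, SimpleGraph {i : Fin n // d i = k})
    (Bg : ∀ k ℓ, SimpleGraph {i : Fin n // d i = k ∨ d i = ℓ}) (i : Fin n) :
    ¬ glueRel d Gg Bg i i := by
  intro h
  unfold glueRel at h
  rw [dif_pos rfl] at h
  exact (Gg (d i)).loopless.irrefl _ h

/-- The glued graph. -/
def glueGraph (d : Fin n → ℕ) (Gg : ∀ k, SimpleGraph {i : Fin n // d i = k})
    (Bg : ∀ k ℓ, SimpleGraph {i : Fin n // d i = k ∨ d i = ℓ}) : SimpleGraph (Fin n) where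
  Adj := glueRel d Gg Bg
  symm := ⟨fun a b h => glueRel_symm d Gg Bg h⟩
  loopless := ⟨fun i => glueRel_irrefl d Gg Bg i⟩

end Aux

/-- A feasible tableau is the NDL of a simple graph iff each `D^k` is graphic and
each `D^{k,ℓ}` is graphic as a bipartitioned degree sequence. -/
theorem stmt0 (n : ℕ) (hn : 1 ≤ n) (d : Fin n → ℕ) (hmono : Antitone d)
    (τ : Fin n → Multiset ℕ) (hcard : ∀ i, Multiset.card (τ i) = d i)
    (hfeas : ∀ i, ∀ x ∈ τ i, ∃ j, d j = x) :
    (∃ G : SimpleGraph (Fin n), ∀ i, NDL G i = τ i) ↔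
      ((∀ k : ℕ, (∃ j, d j = k) →
          ∃ Gk : SimpleGraph {i : Fin n // d i = k},
            ∀ x : {i : Fin n // d i = k}, deg Gk x = Multiset.count k (τ x.1)) ∧
       (∀ k ℓ : ℕ, k ≠ ℓ → (∃ j, d j = k) → (∃ j, d j = ℓ) →
          ∃ B : SimpleGraph {i : Fin n // d i = k ∨ d i = ℓ},
            (∀ x y, B.Adj x y →
                (d x.1 = k ∧ d y.1 = ℓ) ∨ (d x.1 = ℓ ∧ d y.1 = k)) ∧
            (∀ x : {i : Fin n // d i = k ∨ d i = ℓ}, d x.1 = k →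
               deg B x = Multiset.count ℓ (τ x.1)) ∧
            (∀ x : {i : Fin n // d i = k ∨ d i = ℓ}, d x.1 = ℓ →
               deg B x = Multiset.count k (τ x.1)))) := by
  classical
  constructor
  · rintro ⟨G, hG⟩
    have hdeg : ∀ j, deg G j = d j := by
      intro j
      rw [← hcard j, ← hG j, card_NDL]
    have hkey : ∀ i m, (G.neighborSet i ∩ {j | d j = m}).ncard = Multiset.count m (τ i) := by
      intro i m
      rw [← hG i, NDL_eq_map_d d G hdeg i, count_map_ncard]
    constructor
    · intro k hk
      refine ⟨G.comap Subtype.val, fun x => ?_⟩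
      rw [deg_subtype]
      have himg : Subtype.val '' ((G.comap Subtype.val).neighborSet x)
          = G.neighborSet x.1 ∩ {j | d j = k} := by
        ext j
        simp only [Set.mem_image, SimpleGraph.mem_neighborSet, SimpleGraph.comap_adj,
          Set.mem_inter_iff, Set.mem_setOf_eq]
        constructor
        · rintro ⟨⟨j', hj'⟩, hadj, rfl⟩; exact ⟨hadj, hj'⟩
        · rintro ⟨hadj, hj⟩; exact ⟨⟨j, hj⟩, hadj, rfl⟩
      rw [himg]
      exact hkey x.1 k
    · intro k ℓ hkl hk hl
      refine ⟨⟨fun x y => G.Adj x.1 y.1 ∧ d x.1 ≠ d y.1,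
          ⟨fun x y h => ⟨h.1.symm, h.2.symm⟩⟩, ⟨fun x h => G.loopless.irrefl x.1 h.1⟩⟩, ?_, ?_, ?_⟩
      · intro x y h
        rcases x.2 with hx | hx <;> rcases y.2 with hy | hy
        · exact absurd (hx.trans hy.symm) h.2
        · exact Or.inl ⟨hx, hy⟩
        · exact Or.inr ⟨hx, hy⟩
        · exact absurd (hx.trans hy.symm) h.2
      · intro x hx
        rw [deg_subtype]
        have himg : Subtype.val ''
            ((⟨fun x y => G.Adj x.1 y.1 ∧ d x.1 ≠ d y.1,
              ⟨fun x y h => ⟨h.1.symm, h.2.symm⟩⟩, ⟨fun x h => G.loopless.irrefl x.1 h.1⟩⟩ :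
                SimpleGraph {i : Fin n // d i = k ∨ d i = ℓ}).neighborSet x)
            = G.neighborSet x.1 ∩ {j | d j = ℓ} := by
          ext j
          simp only [Set.mem_image, SimpleGraph.mem_neighborSet, Set.mem_inter_iff,
            Set.mem_setOf_eq]
          constructor
          · rintro ⟨⟨j', hj'⟩, ⟨hadj, hne⟩, rfl⟩
            refine ⟨hadj, ?_⟩
            rcases hj' with h' | h'
            · exact absurd (hx.trans h'.symm) hne
            · exact h'
          · rintro ⟨hadj, hj⟩
            exact ⟨⟨j, Or.inr hj⟩, ⟨hadj, by rw [hx, hj]; exact hkl⟩, rfl⟩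
        rw [himg]
        exact hkey x.1 ℓ
      · intro x hx
        rw [deg_subtype]
        have himg : Subtype.val ''
            ((⟨fun x y => G.Adj x.1 y.1 ∧ d x.1 ≠ d y.1,
              ⟨fun x y h => ⟨h.1.symm, h.2.symm⟩⟩, ⟨fun x h => G.loopless.irrefl x.1 h.1⟩⟩ :
                SimpleGraph {i : Fin n // d i = k ∨ d i = ℓ}).neighborSet x)
            = G.neighborSet x.1 ∩ {j | d j = k} := by
          ext j
          simp only [Set.mem_image, SimpleGraph.mem_neighborSet, Set.mem_inter_iff,
            Set.mem_setOf_eq]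
          constructor
          · rintro ⟨⟨j', hj'⟩, ⟨hadj, hne⟩, rfl⟩
            refine ⟨hadj, ?_⟩
            rcases hj' with h' | h'
            · exact h'
            · exact absurd (hx.trans h'.symm) hne
          · rintro ⟨hadj, hj⟩
            exact ⟨⟨j, Or.inl hj⟩, ⟨hadj, by rw [hx, hj]; exact hkl.symm⟩, rfl⟩
        rw [himg]
        exact hkey x.1 k
  · rintro ⟨ha, hb⟩
    have hGg' : ∀ k : ℕ, ∃ Gk : SimpleGraph {i : Fin n // d i = k},
        (∃ j, d j = k) → ∀ x, deg Gk x = Multiset.count k (τ x.1) := by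
      intro k
      by_cases h : ∃ j, d j = k
      · obtain ⟨Gk, hGk⟩ := ha k h
        exact ⟨Gk, fun _ => hGk⟩
      · exact ⟨⊥, fun hh => absurd hh h⟩
    choose Gg hGg using hGg'
    have hBg' : ∀ k ℓ : ℕ, ∃ B : SimpleGraph {i : Fin n // d i = k ∨ d i = ℓ},
        (k ≠ ℓ ∧ (∃ j, d j = k) ∧ (∃ j, d j = ℓ)) →
          ((∀ x y, B.Adj x y → (d x.1 = k ∧ d y.1 = ℓ) ∨ (d x.1 = ℓ ∧ d y.1 = k)) ∧
           (∀ x, d x.1 = k → deg B x = Multiset.count ℓ (τ x.1)) ∧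
           (∀ x, d x.1 = ℓ → deg B x = Multiset.count k (τ x.1))) := by
      intro k ℓ
      by_cases h : k ≠ ℓ ∧ (∃ j, d j = k) ∧ (∃ j, d j = ℓ)
      · obtain ⟨B, hB⟩ := hb k ℓ h.1 h.2.1 h.2.2
        exact ⟨B, fun _ => hB⟩
      · exact ⟨⊥, fun hh => absurd hh h⟩
    choose Bg hBg using hBg'
    refine ⟨glueGraph d Gg Bg, ?_⟩
    have hset : ∀ i m, ((glueGraph d Gg Bg).neighborSet i ∩ {j | d j = m}).ncard
        = Multiset.count m (τ i) := by
      intro i m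
      by_cases hm : ∃ j, d j = m
      · rcases eq_or_ne m (d i) with rfl | hne
        · have himg : Subtype.val '' ((Gg (d i)).neighborSet ⟨i, rfl⟩)
              = (glueGraph d Gg Bg).neighborSet i ∩ {j | d j = d i} := by
            ext j
            simp only [Set.mem_image, Set.mem_inter_iff, SimpleGraph.mem_neighborSet,
              Set.mem_setOf_eq]
            constructor
            · rintro ⟨⟨j', hj'⟩, hadj', rfl⟩
              refine ⟨?_, hj'⟩
              show glueRel d Gg Bg i j'
              unfold glueRel
              rw [dif_pos hj'.symm]
              exact hadj'
            · rintro ⟨hr, hdj⟩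
              change glueRel d Gg Bg i j at hr
              unfold glueRel at hr
              rw [dif_pos hdj.symm] at hr
              exact ⟨⟨j, hdj⟩, hr, rfl⟩
          rw [← himg, Set.ncard_image_of_injective _ Subtype.val_injective]
          exact hGg (d i) ⟨i, rfl⟩ ⟨i, rfl⟩
        · rcases lt_or_gt_of_ne hne with hlt | hgt
          · -- m < d i : use Bg m (d i)
            obtain hB := hBg m (d i) ⟨hne, hm, ⟨i, rfl⟩⟩
            have himg : Subtype.val '' ((Bg m (d i)).neighborSet ⟨i, Or.inr rfl⟩)
                = (glueGraph d Gg Bg).neighborSet i ∩ {j | d j = m} := by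
              ext j
              simp only [Set.mem_image, Set.mem_inter_iff, SimpleGraph.mem_neighborSet,
                Set.mem_setOf_eq]
              constructor
              · rintro ⟨⟨j', hj'⟩, hadj', rfl⟩
                have hdj : d j' = m := by
                  rcases hB.1 _ _ hadj' with ⟨h1, _⟩ | ⟨_, h2⟩
                  · exact absurd h1.symm hne
                  · exact h2
                refine ⟨?_, hdj⟩
                show glueRel d Gg Bg i j'
                unfold glueRel
                rw [dif_neg (show d i ≠ d j' by rw [hdj]; exact hne.symm)]
                rw [if_pos (show d j' < d i by rw [hdj]; exact hlt)]
                exact castB Bg hdj.symm rfl (Or.inr rfl) hj' (Or.inr rfl) (Or.inl rfl) hadj'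
              · rintro ⟨hr, hdj⟩
                change glueRel d Gg Bg i j at hr
                unfold glueRel at hr
                rw [dif_neg (show d i ≠ d j by rw [hdj]; exact hne.symm)] at hr
                rw [if_pos (show d j < d i by rw [hdj]; exact hlt)] at hr
                exact ⟨⟨j, Or.inl hdj⟩,
                  castB Bg hdj rfl (Or.inr rfl) (Or.inl rfl) (Or.inr rfl) (Or.inl hdj) hr, rfl⟩
            rw [← himg, Set.ncard_image_of_injective _ Subtype.val_injective]
            exact hB.2.2 ⟨i, Or.inr rfl⟩ rfl
          · -- d i < m : use Bg (d i) m
            obtain hB := hBg (d i) m ⟨Ne.symm hne, ⟨i, rfl⟩, hm⟩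
            have himg : Subtype.val '' ((Bg (d i) m).neighborSet ⟨i, Or.inl rfl⟩)
                = (glueGraph d Gg Bg).neighborSet i ∩ {j | d j = m} := by
              ext j
              simp only [Set.mem_image, Set.mem_inter_iff, SimpleGraph.mem_neighborSet,
                Set.mem_setOf_eq]
              constructor
              · rintro ⟨⟨j', hj'⟩, hadj', rfl⟩
                have hdj : d j' = m := by
                  rcases hB.1 _ _ hadj' with ⟨_, h2⟩ | ⟨h1, _⟩
                  · exact h2
                  · exact absurd h1 (Ne.symm hne)
                refine ⟨?_, hdj⟩
                show glueRel d Gg Bg i j'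
                unfold glueRel
                rw [dif_neg (show d i ≠ d j' by rw [hdj]; exact Ne.symm hne)]
                rw [if_neg (show ¬ d j' < d i by rw [hdj]; exact not_lt.2 hgt.le)]
                exact castB Bg rfl hdj.symm (Or.inl rfl) hj' (Or.inl rfl) (Or.inr rfl) hadj'
              · rintro ⟨hr, hdj⟩
                change glueRel d Gg Bg i j at hr
                unfold glueRel at hr
                rw [dif_neg (show d i ≠ d j by rw [hdj]; exact Ne.symm hne)] at hr
                rw [if_neg (show ¬ d j < d i by rw [hdj]; exact not_lt.2 hgt.le)] at hr
                exact ⟨⟨j, Or.inr hdj⟩,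
                  castB Bg rfl hdj (Or.inl rfl) (Or.inr rfl) (Or.inl rfl) (Or.inr hdj) hr, rfl⟩
            rw [← himg, Set.ncard_image_of_injective _ Subtype.val_injective]
            exact hB.2.1 ⟨i, Or.inl rfl⟩ rfl
      · have h1 : (glueGraph d Gg Bg).neighborSet i ∩ {j | d j = m} = ∅ := by
          ext j
          simp only [Set.mem_inter_iff, Set.mem_setOf_eq, Set.mem_empty_iff_false, iff_false,
            not_and]
          intro _ hj
          exact hm ⟨j, hj⟩
        rw [h1, Set.ncard_empty, eq_comm, Multiset.count_eq_zero]
        intro hmem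
        exact hm (hfeas i m hmem)
    have hM : ∀ i, (((glueGraph d Gg Bg).neighborSet i).toFinite.toFinset).val.map d = τ i := by
      intro i
      refine Multiset.ext.2 fun m => ?_
      rw [count_map_ncard]
      exact hset i m
    have hdeg : ∀ j, deg (glueGraph d Gg Bg) j = d j := by
      intro j
      have h1 : Multiset.card ((((glueGraph d Gg Bg).neighborSet j).toFinite.toFinset).val.map d)
          = Multiset.card (τ j) := by rw [hM]
      rw [Multiset.card_map, hcard] at h1
      rw [deg, Set.ncard_eq_toFinset_card _ ((glueGraph d Gg Bg).neighborSet j).toFinite]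
      exact h1
    intro i
    rw [NDL_eq_map_d d (glueGraph d Gg Bg) hdeg i, hM i]
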